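/- Let G_n = F^{⊗n} with rows g_1,…,g_N (N = 2^n). If 1 ≤ k ≤ N and i = k + m ≤ N with m ≥ 1, then g_k ⊕ g_i = g_k ∑_{l : g_{i−k+1, l+1} = 1, 1 ≤ l ≤ N−1} C_N^l, i.e., adding a lower row of G_n to row g_k equals applying to g_k the sum of clockwise cyclic shifts at positions given by the support (excluding the first coordinate) of row g_{i−k+1}. -/
import Mathlib


/-- `G_n = F^{⊗n}` for `F = [[1,0],[1,1]]` over `𝔽₂` (0-indexed). -/
def polarG (n : ℕ) : Matrix (Fin (2^n)) (Fin (2^n)) (ZMod 2) :=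
  Matrix.of fun i j => if j.val &&& i.val = j.val then 1 else 0

/-- The `N×N` clockwise cyclic shift matrix by `j` places over `𝔽₂`. -/
def cyc (N j : ℕ) : Matrix (Fin N) (Fin N) (ZMod 2) :=
  Matrix.of fun i k => if (i.val + j) % N = k.val then 1 else 0

lemma andSelfIff (a b : ℕ) : a &&& b = a ↔ ∀ i, a.testBit i = true → b.testBit i = true := by
  constructor
  · intro h i hi
    have := congrArg (fun t => t.testBit i) h
    simp only [Nat.testBit_and, hi, Bool.true_and] at this
    exact this
  · intro h
    apply Nat.eq_of_testBit_eq
    intro i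
    rw [Nat.testBit_and]
    cases ha : a.testBit i
    · simp
    · simp [h i ha]

lemma andDecomp (x k : ℕ) : x &&& k = x ↔ (x % 2 &&& k % 2 = x % 2 ∧ x / 2 &&& k / 2 = x / 2) := by
  constructor
  · intro h
    rw [andSelfIff] at h
    constructor
    · rcases Nat.mod_two_eq_zero_or_one x with hx | hx <;>
        rcases Nat.mod_two_eq_zero_or_one k with hk | hk <;> rw [hx, hk]
      · decide
      · decide
      · exfalso
        have := h 0 (by rw [Nat.testBit_zero]; simp [hx])
        rw [Nat.testBit_zero] at this
        simp [hk] at this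
      · decide
    · rw [andSelfIff]
      intro i hi
      rw [Nat.testBit_div_two] at hi ⊢
      exact h _ hi
  · rintro ⟨h0, hs⟩
    rw [andSelfIff] at hs ⊢
    intro i hi
    match i with
    | 0 =>
      rw [Nat.testBit_zero] at hi ⊢
      simp only [decide_eq_true_eq] at hi ⊢
      rcases Nat.mod_two_eq_zero_or_one k with hk | hk
      · rw [hi, hk] at h0; simp at h0
      · exact hk
    | j+1 =>
      have := hs j (by rw [Nat.testBit_div_two]; exact hi)
      rw [Nat.testBit_div_two] at this
      exact this

lemma lucas2 : ∀ k x : ℕ, ((k.choose x : ZMod 2)) = if x &&& k = x then 1 else 0 := by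
  intro k
  induction k using Nat.strong_induction_on with
  | _ k ih =>
    intro x
    rcases Nat.eq_zero_or_pos k with hk | hk
    · subst hk
      cases x with
      | zero => simp
      | succ y => simp [Nat.choose]
    · have key : (k.choose x : ZMod 2) =
          ((k % 2).choose (x % 2) : ZMod 2) * ((k / 2).choose (x / 2) : ZMod 2) := by
        have h := Choose.choose_modEq_choose_mod_mul_choose_div (p := 2) (n := k) (k := x)
        have h2 := (ZMod.intCast_eq_intCast_iff _ _ _).mpr h
        push_cast at h2
        exact_mod_cast h2
      have h2 : k / 2 < k := Nat.div_lt_self hk (by norm_num)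
      rw [key, ih _ h2 (x / 2)]
      have hlow : (((k % 2).choose (x % 2) : ZMod 2)) = if x % 2 &&& k % 2 = x % 2 then 1 else 0 := by
        rcases Nat.mod_two_eq_zero_or_one x with hx | hx <;>
          rcases Nat.mod_two_eq_zero_or_one k with hk' | hk' <;> rw [hx, hk'] <;> decide
      rw [hlow, if_congr (andDecomp x k) rfl rfl]
      by_cases hA : x % 2 &&& k % 2 = x % 2 <;> by_cases hB : x / 2 &&& k / 2 = x / 2 <;>
        simp [hA, hB]


lemma keySum (n m : ℕ) (k i j : Fin (2^n)) (hi : i.val = k.val + m) :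
    ∑ l ∈ Finset.univ.filter (fun l : Fin (2^n) => l.val &&& m = l.val), ∑ x : Fin (2^n),
      (if x.val &&& k.val = x.val then (1:ZMod 2) else 0) *
        (if (x.val + l.val) % 2^n = j.val then 1 else 0)
    = (i.val.choose j.val : ZMod 2) := by
  have hiN : k.val + m < 2^n := hi ▸ i.isLt
  have hJ : j.val < 2^n := j.isLt
  rw [Finset.sum_filter]
  have conv1 : ∀ l : Fin (2^n),
      (if l.val &&& m = l.val then (∑ x : Fin (2^n),
        (if x.val &&& k.val = x.val then (1:ZMod 2) else 0) *
        (if (x.val + l.val) % 2^n = j.val then 1 else 0)) else 0)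
      = ∑ x : Fin (2^n), (if l.val &&& m = l.val then (1:ZMod 2) else 0) *
        ((if x.val &&& k.val = x.val then (1:ZMod 2) else 0) *
        (if (x.val + l.val) % 2^n = j.val then 1 else 0)) := by
    intro l
    rw [← Finset.mul_sum]
    split_ifs <;> simp
  rw [Finset.sum_congr rfl (fun l _ => conv1 l)]
  have step1 : ∀ l x : ℕ,
      (if l &&& m = l then (1:ZMod 2) else 0) *
        ((if x &&& k.val = x then (1:ZMod 2) else 0) *
          (if (x + l) % 2^n = j.val then 1 else 0))
      = (m.choose l : ZMod 2) * ((k.val.choose x : ZMod 2) *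
          (if x + l = j.val then 1 else 0)) := by
    intro l x
    rw [lucas2 m l, lucas2 k.val x]
    by_cases hl : l &&& m = l <;> by_cases hx : x &&& k.val = x <;> simp [hl, hx]
    have hlm : l ≤ m := hl ▸ Nat.and_le_right
    have hxk : x ≤ k.val := hx ▸ Nat.and_le_right
    have : (x + l) % 2^n = x + l := Nat.mod_eq_of_lt (by omega)
    rw [this]
  simp only [step1]
  rw [Finset.sum_comm]
  have inner : ∀ x : Fin (2^n),
      ∑ l : Fin (2^n), (m.choose l.val : ZMod 2) * ((k.val.choose x.val : ZMod 2) *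
        (if x.val + l.val = j.val then 1 else 0))
      = (k.val.choose x.val : ZMod 2) *
          (if x.val ≤ j.val then (m.choose (j.val - x.val) : ZMod 2) else 0) := by
    intro x
    by_cases hx : x.val ≤ j.val
    · have hmem : (⟨j.val - x.val, by omega⟩ : Fin (2^n)) = (⟨j.val - x.val, by omega⟩ : Fin (2^n)) := rfl
      have congr1 : ∀ l : Fin (2^n),
          (m.choose l.val : ZMod 2) * ((k.val.choose x.val : ZMod 2) *
            (if x.val + l.val = j.val then 1 else 0))
          = if l = (⟨j.val - x.val, by omega⟩ : Fin (2^n)) then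
              (k.val.choose x.val : ZMod 2) * (m.choose (j.val - x.val) : ZMod 2) else 0 := by
        intro l
        by_cases h : x.val + l.val = j.val
        · have : l = (⟨j.val - x.val, by omega⟩ : Fin (2^n)) := by
            apply Fin.ext; simp; omega
          rw [if_pos h, if_pos this, mul_one, show j.val - x.val = l.val by omega, mul_comm]
        · have : l ≠ (⟨j.val - x.val, by omega⟩ : Fin (2^n)) := by
            intro he; apply h; rw [he]; simp; omega
          simp [h, this]
      rw [Finset.sum_congr rfl (fun l _ => congr1 l), Finset.sum_ite_eq' Finset.univ _ _]
      simp [hx]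
    · have : ∀ l : Fin (2^n), (m.choose l.val : ZMod 2) * ((k.val.choose x.val : ZMod 2) *
          (if x.val + l.val = j.val then 1 else 0)) = 0 := by
        intro l
        have : ¬ (x.val + l.val = j.val) := by omega
        simp [this]
      rw [Finset.sum_congr rfl (fun l _ => this l)]
      simp [hx]
  rw [Finset.sum_congr rfl (fun x _ => inner x)]
  have conv2 : ∀ x : Fin (2^n),
      (k.val.choose x.val : ZMod 2) *
        (if x.val ≤ j.val then (m.choose (j.val - x.val) : ZMod 2) else 0)
      = if x.val ≤ j.val then
          (k.val.choose x.val : ZMod 2) * (m.choose (j.val - x.val) : ZMod 2) else 0 := by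
    intro x; split_ifs <;> simp
  rw [Finset.sum_congr rfl (fun x _ => conv2 x)]
  -- convert to range sum
  rw [show (∑ x : Fin (2^n), if x.val ≤ j.val then
        (k.val.choose x.val : ZMod 2) * (m.choose (j.val - x.val) : ZMod 2) else 0)
      = ∑ x ∈ Finset.range (2^n), if x ≤ j.val then
        (k.val.choose x : ZMod 2) * (m.choose (j.val - x) : ZMod 2) else 0 from
    Fin.sum_univ_eq_sum_range (fun x => if x ≤ j.val then
        (k.val.choose x : ZMod 2) * (m.choose (j.val - x) : ZMod 2) else 0) (2^n)]
  rw [← Finset.sum_filter]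
  have hfr : (Finset.range (2^n)).filter (· ≤ j.val) = Finset.range (j.val + 1) := by
    ext a; simp; omega
  rw [hfr]
  have hv := Nat.add_choose_eq k.val m j.val
  rw [hi, hv]
  rw [Finset.Nat.sum_antidiagonal_eq_sum_range_succ_mk]
  push_cast
  rfl

/-- For rows `g_k` and `g_i` of `G_n` with `i = k + m`, `m ≥ 1` (0-indexed; in
1-indexed terms `i = k + m ≤ N`), adding the lower row `g_i` to `g_k` equals applying
to `g_k` the sum of clockwise cyclic shifts at the positions of the ones of row
`g_{i−k+1}` (0-indexed row `m`), excluding the first coordinate. -/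
theorem stmt6 (n m : ℕ) (hm : 1 ≤ m) (k i : Fin (2^n)) (hi : i.val = k.val + m) :
    polarG n k + polarG n i =
      Matrix.vecMul (polarG n k)
        (∑ l ∈ Finset.univ.filter
            (fun l : Fin (2^n) => 1 ≤ l.val ∧
              polarG n ⟨m, by have h0 := i.isLt; omega⟩ l = 1),
          cyc (2^n) l.val) := by
  haveI : NeZero (2^n) := ⟨by positivity⟩
  have hiN : k.val + m < 2^n := hi ▸ i.isLt
  have hM : ∀ (pf : m < 2^n) (l : Fin (2^n)), (polarG n ⟨m, pf⟩ l = 1) ↔ l.val &&& m = l.val := by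
    intro pf l
    constructor
    · intro h1
      by_contra hc
      simp only [polarG, Matrix.of_apply] at h1
      rw [if_neg hc] at h1
      exact one_ne_zero h1.symm
    · intro hc
      simp only [polarG, Matrix.of_apply]
      rw [if_pos hc]
  funext j
  simp only [hM]
  rw [Pi.add_apply]
  have hvec : Matrix.vecMul (polarG n k)
      (∑ l ∈ Finset.univ.filter (fun l : Fin (2^n) => 1 ≤ l.val ∧ l.val &&& m = l.val),
        cyc (2^n) l.val) j
      = ∑ l ∈ Finset.univ.filter (fun l : Fin (2^n) => 1 ≤ l.val ∧ l.val &&& m = l.val),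
          ∑ x : Fin (2^n), (if x.val &&& k.val = x.val then (1:ZMod 2) else 0) *
            (if (x.val + l.val) % 2^n = j.val then 1 else 0) := by
    simp only [Matrix.vecMul, dotProduct, Matrix.sum_apply, Finset.mul_sum,
      polarG, cyc, Matrix.of_apply]
    rw [Finset.sum_comm]
  rw [hvec]
  set f : Fin (2^n) → ZMod 2 := fun l =>
    ∑ x : Fin (2^n), (if x.val &&& k.val = x.val then (1:ZMod 2) else 0) *
      (if (x.val + l.val) % 2^n = j.val then 1 else 0) with hf
  have hsets : Finset.univ.filter (fun l : Fin (2^n) => 1 ≤ l.val ∧ l.val &&& m = l.val)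
      = (Finset.univ.filter (fun l : Fin (2^n) => l.val &&& m = l.val)).erase 0 := by
    ext l
    simp only [Finset.mem_filter, Finset.mem_erase, Finset.mem_univ, true_and]
    constructor
    · rintro ⟨h1, h2⟩
      refine ⟨?_, h2⟩
      intro he
      rw [he] at h1
      simp at h1
    · rintro ⟨h1, h2⟩
      refine ⟨?_, h2⟩
      rcases Nat.eq_zero_or_pos l.val with h | h
      · exact absurd (Fin.ext (by simpa using h)) h1
      · exact h
  have h0mem : (0 : Fin (2^n)) ∈ Finset.univ.filter
      (fun l : Fin (2^n) => l.val &&& m = l.val) := by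
    simp [Nat.zero_and]
  have hsplit := Finset.sum_erase_add
    (Finset.univ.filter (fun l : Fin (2^n) => l.val &&& m = l.val)) f h0mem
  have hfull : ∑ l ∈ Finset.univ.filter (fun l : Fin (2^n) => l.val &&& m = l.val), f l
      = (i.val.choose j.val : ZMod 2) := keySum n m k i j hi
  have hf0 : f 0 = (if j.val &&& k.val = j.val then (1:ZMod 2) else 0) := by
    rw [hf]
    beta_reduce
    have hterm : ∀ x : Fin (2^n),
        (if x.val &&& k.val = x.val then (1:ZMod 2) else 0) *
          (if (x.val + (0 : Fin (2^n)).val) % 2^n = j.val then 1 else 0)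
        = if x = j then (if x.val &&& k.val = x.val then (1:ZMod 2) else 0) else 0 := by
      intro x
      have hx : (x.val + (0 : Fin (2^n)).val) % 2^n = x.val := by
        simp [Nat.mod_eq_of_lt x.isLt]
      rw [hx]
      by_cases h : x = j
      · simp [h]
      · have hne : x.val ≠ j.val := fun hh => h (Fin.ext hh)
        simp [hne, h]
    rw [Finset.sum_congr rfl (fun x _ => hterm x), Finset.sum_ite_eq' Finset.univ j _]
    simp
  rw [hsets]
  rw [hfull, hf0] at hsplit
  have hlu := lucas2 i.val j.val
  rw [hlu] at hsplit
  simp only [polarG, Matrix.of_apply]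
  have habc : ∀ u v w : ZMod 2, w + u = v → u + v = w := by decide
  exact habc _ _ _ hsplit
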